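/- Let n ≥ 1 and m ≥ 1 be integers. Let A_1, …, A_m be real symmetric n×n matrices and let B_{αβ} (for α, β ∈ {1, …, m}) be arbitrary real n×n matrices. Set S = ∑_{α} ‖A_α‖_F² and ‖B‖ = sqrt(∑_{α,β} ‖B_{αβ}‖_F²). Then ∑_{α,β} (tr(A_α A_β))² + ∑_{α,β} ‖B_{αβ} + (A_α A_β − A_β A_α)‖_F² ≤ (3/2)·S² + ‖B‖² + 4·‖B‖·S. -/

import Mathlib

open Matrix BigOperators Finset

namespace Stmt16


variable {n m : ℕ}

def nsq (X : Matrix (Fin n) (Fin n) ℝ) : ℝ := ∑ i, ∑ j, (X i j)^2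
def ipm (X Y : Matrix (Fin n) (Fin n) ℝ) : ℝ := ∑ i, ∑ j, X i j * Y i j

lemma nsq_nonneg (X : Matrix (Fin n) (Fin n) ℝ) : 0 ≤ nsq X := by
  unfold nsq; positivity

lemma ipm_self (X : Matrix (Fin n) (Fin n) ℝ) : ipm X X = nsq X := by
  unfold ipm nsq; simp [sq]

/-- Contraction against an orthogonal matrix: `∑ r, (∑ α, O r α * x α) * (∑ β, O r β * y β) = ∑ α, x α * y α`. -/
lemma orth_contract {m : ℕ} (O : Matrix (Fin m) (Fin m) ℝ) (hO : Oᵀ * O = 1)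
    (x y : Fin m → ℝ) :
    ∑ r, (∑ α, O r α * x α) * (∑ β, O r β * y β) = ∑ α, x α * y α := by
  have key : ∀ α β, ∑ r, O r α * O r β = if α = β then (1:ℝ) else 0 := by
    intro α β
    have : (Oᵀ * O) α β = (1 : Matrix (Fin m) (Fin m) ℝ) α β := by rw [hO]
    simpa [Matrix.mul_apply, Matrix.transpose_apply, Matrix.one_apply] using this
  calc ∑ r, (∑ α, O r α * x α) * (∑ β, O r β * y β)
      = ∑ r, ∑ α, ∑ β, (O r α * O r β) * (x α * y β) := by
        apply Finset.sum_congr rfl; intro r _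
        rw [Finset.sum_mul_sum]
        apply Finset.sum_congr rfl; intro α _
        apply Finset.sum_congr rfl; intro β _
        ring
    _ = ∑ α, ∑ β, (∑ r, O r α * O r β) * (x α * y β) := by
        rw [Finset.sum_comm]
        apply Finset.sum_congr rfl; intro α _
        rw [Finset.sum_comm]
        apply Finset.sum_congr rfl; intro β _
        rw [Finset.sum_mul]
    _ = ∑ α, x α * y α := by
        apply Finset.sum_congr rfl; intro α _
        rw [Finset.sum_eq_single α]
        · simp [key]
        · intro β _ hβ; rw [key]; simp [Ne.symm hβ]
        · intro h; exact absurd (Finset.mem_univ α) h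

/-- Double contraction. -/
lemma orth_contract2 {m : ℕ} (O P : Matrix (Fin m) (Fin m) ℝ)
    (hO : Oᵀ * O = 1) (hP : Pᵀ * P = 1) (c d : Fin m → Fin m → ℝ) :
    ∑ r, ∑ s, (∑ α, ∑ β, O r α * P s β * c α β) * (∑ α, ∑ β, O r α * P s β * d α β)
      = ∑ α, ∑ β, c α β * d α β := by
  have inner : ∀ (e : Fin m → Fin m → ℝ) (r s : Fin m), (∑ α, ∑ β, O r α * P s β * e α β) = ∑ α, O r α * (∑ β, P s β * e α β) := by
    intro e r s
    apply Finset.sum_congr rfl; intro α _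
    rw [Finset.mul_sum]
    apply Finset.sum_congr rfl; intro β _; ring
  calc ∑ r, ∑ s, (∑ α, ∑ β, O r α * P s β * c α β) * (∑ α, ∑ β, O r α * P s β * d α β)
      = ∑ s, ∑ r, (∑ α, O r α * (∑ β, P s β * c α β)) * (∑ α, O r α * (∑ β, P s β * d α β)) := by
        rw [Finset.sum_comm]
        exact Finset.sum_congr rfl fun s _ => Finset.sum_congr rfl fun r _ => by rw [inner c, inner d]
    _ = ∑ s, ∑ α, (∑ β, P s β * c α β) * (∑ β, P s β * d α β) := by
        exact Finset.sum_congr rfl fun s _ => orth_contract O hO _ _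
    _ = ∑ α, ∑ s, (∑ β, P s β * c α β) * (∑ β, P s β * d α β) := Finset.sum_comm
    _ = ∑ α, ∑ β, c α β * d α β := by
        exact Finset.sum_congr rfl fun α _ => orth_contract P hP _ _



/-- Weighted Anderson–Morley-type bound. -/
lemma graph_bound {N : ℕ} (σ : Fin N → Fin N → ℝ)
    (hsym : ∀ p q, σ p q = σ q p) (hnn : ∀ p q, 0 ≤ σ p q) (hdiag : ∀ p, σ p p = 0)
    (c : ℝ) (hc0 : 0 ≤ c) (hc : ∀ p q, σ p q ≤ c) (lam : Fin N → ℝ) :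
    ∑ p, ∑ q, σ p q * (lam p - lam q)^2
      ≤ ((∑ p, ∑ q, σ p q) + 2*c) * ∑ p, (lam p)^2 := by
  set t : Fin N → ℝ := fun p => ∑ q, σ p q with ht
  have htdef : ∀ p, t p = ∑ q, σ p q := fun p => rfl
  have htnn : ∀ p, 0 ≤ t p := fun p => Finset.sum_nonneg (fun q _ => hnn p q)
  have htge : ∀ p q, σ p q ≤ t p := by
    intro p q
    rw [htdef]
    exact Finset.single_le_sum (fun q' _ => hnn p q') (Finset.mem_univ q)
  set Θ : ℝ := ∑ p, ∑ q, σ p q with hΘ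
  have hΘdef : Θ = ∑ p, t p := by rw [hΘ]
  set K : ℝ := Θ/2 + c with hK
  have hΘnn : 0 ≤ Θ := Finset.sum_nonneg fun p _ => Finset.sum_nonneg fun q _ => hnn p q
  have hKnn : 0 ≤ K := by rw [hK]; positivity
  -- counting bound: for p ≠ q, t p + t q ≤ Θ/2 + σ p q
  have hcount : ∀ p q, p ≠ q → t p + t q ≤ Θ/2 + σ p q := by
    intro p q hpq
    have e1 : σ p q + ∑ v ∈ univ.erase q, σ p v = t p := by
      rw [htdef]; exact Finset.add_sum_erase _ _ (Finset.mem_univ q)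
    have e2 : σ p p + ∑ v ∈ (univ.erase q).erase p, σ p v = ∑ v ∈ univ.erase q, σ p v :=
      Finset.add_sum_erase _ _ (Finset.mem_erase.mpr ⟨hpq, Finset.mem_univ p⟩)
    have e3 : σ q p + ∑ v ∈ univ.erase p, σ q v = t q := by
      rw [htdef]; exact Finset.add_sum_erase _ _ (Finset.mem_univ p)
    have e4 : σ q q + ∑ v ∈ (univ.erase p).erase q, σ q v = ∑ v ∈ univ.erase p, σ q v :=
      Finset.add_sum_erase _ _ (Finset.mem_erase.mpr ⟨Ne.symm hpq, Finset.mem_univ q⟩)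
    have eE : (univ.erase q).erase p = (univ.erase p).erase q := Finset.erase_right_comm
    -- Θ as sum of column sums, split off columns p and q
    have hcol : ∀ v, (∑ u, σ u v) = t v := by
      intro v; rw [htdef]; exact Finset.sum_congr rfl fun u _ => hsym u v
    have e5 := Finset.add_sum_erase univ (fun v => ∑ u, σ u v) (Finset.mem_univ p)
    have e5' : ∑ v, (∑ u, σ u v) = Θ := by rw [hΘ]; exact Finset.sum_comm
    have e6 := Finset.add_sum_erase (univ.erase p) (fun v => ∑ u, σ u v)
      (Finset.mem_erase.mpr ⟨Ne.symm hpq, Finset.mem_univ q⟩)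
    have hbig : ∑ v ∈ (univ.erase p).erase q, (σ p v + σ q v)
        ≤ ∑ v ∈ (univ.erase p).erase q, (∑ u, σ u v) := by
      apply Finset.sum_le_sum
      intro v _
      have hsub : ∑ u ∈ ({p, q} : Finset (Fin N)), σ u v ≤ ∑ u, σ u v :=
        Finset.sum_le_sum_of_subset_of_nonneg (Finset.subset_univ _) (fun u _ _ => hnn u v)
      rwa [Finset.sum_pair hpq] at hsub
    have hsplitsum : ∑ v ∈ (univ.erase p).erase q, (σ p v + σ q v)
        = (∑ v ∈ (univ.erase p).erase q, σ p v) + ∑ v ∈ (univ.erase p).erase q, σ q v :=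
      Finset.sum_add_distrib
    have hσqq := hdiag q
    have hσpp := hdiag p
    have hsympq := hsym q p
    have hc1 := hcol p
    have hc2 := hcol q
    rw [eE] at e2
    linarith [e1, e2, e3, e4, e5, e5', e6, hbig, hsplitsum]
  -- per-edge estimate
  have hedge : ∀ p q, σ p q * (lam p - lam q)^2
      ≤ (σ p q + σ p q * (t q / t p)) * (lam p)^2 + (σ p q + σ p q * (t p / t q)) * (lam q)^2 := by
    intro p q
    rcases eq_or_lt_of_le (hnn p q) with h0 | hpos
    · rw [← h0]; simp
    · have hp : 0 < t p := lt_of_lt_of_le hpos (htge p q)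
      have hq : 0 < t q := lt_of_lt_of_le (by rw [hsym p q] at hpos; exact hpos) (htge q p)
      have h2 : 0 < t p * t q := mul_pos hp hq
      have e : t q / t p * (lam p)^2 + t p / t q * (lam q)^2 + 2 * lam p * lam q
          = (t q * lam p + t p * lam q)^2 / (t p * t q) := by
        field_simp; ring
      have h1 : 0 ≤ t q / t p * (lam p)^2 + t p / t q * (lam q)^2 + 2 * lam p * lam q := by
        rw [e]; positivity
      have key : (lam p - lam q)^2 ≤ (1 + t q / t p) * (lam p)^2 + (1 + t p / t q) * (lam q)^2 := by
        nlinarith [h1]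
      calc σ p q * (lam p - lam q)^2
          ≤ σ p q * ((1 + t q / t p) * (lam p)^2 + (1 + t p / t q) * (lam q)^2) :=
            mul_le_mul_of_nonneg_left key (hnn p q)
        _ = (σ p q + σ p q * (t q / t p)) * (lam p)^2 + (σ p q + σ p q * (t p / t q)) * (lam q)^2 := by
            ring
  -- row bound
  have hrow : ∀ p, (∑ q, (σ p q + σ p q * (t q / t p))) ≤ K := by
    intro p
    have hsum : (∑ q, (σ p q + σ p q * (t q / t p))) = t p + (∑ q, σ p q * t q) / t p := by
      have h2 : ∑ q, σ p q * (t q / t p) = (∑ q, σ p q * t q) / t p := by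
        rw [Finset.sum_div]
        exact Finset.sum_congr rfl fun q _ => (mul_div_assoc _ _ _).symm
      rw [Finset.sum_add_distrib, h2, ← htdef p]
    rcases eq_or_lt_of_le (htnn p) with h0 | hp
    · have hz : ∀ q, σ p q = 0 := by
        intro q
        have h1 : σ p q ≤ 0 := by rw [h0]; exact htge p q
        exact le_antisymm h1 (hnn p q)
      rw [hsum, ← h0]
      simp [hz]
      exact hKnn
    · have hterm : ∀ q, σ p q * t q ≤ σ p q * (K - t p) := by
        intro q
        rcases eq_or_lt_of_le (hnn p q) with h0' | hpos'
        · rw [← h0']; simp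
        · have hpq : p ≠ q := by
            intro h; rw [h, hdiag] at hpos'; exact lt_irrefl 0 hpos'
          have := hcount p q hpq
          have hKq : t q ≤ K - t p := by
            have hcq := hc p q
            rw [hK]; linarith
          exact mul_le_mul_of_nonneg_left hKq (hnn p q)
      have hsum2 : (∑ q, σ p q * t q) ≤ t p * (K - t p) := by
        calc (∑ q, σ p q * t q) ≤ ∑ q, σ p q * (K - t p) := Finset.sum_le_sum fun q _ => hterm q
          _ = (∑ q, σ p q) * (K - t p) := by rw [Finset.sum_mul]
          _ = t p * (K - t p) := by rw [← htdef]
      have hdiv : (∑ q, σ p q * t q) / t p ≤ K - t p := by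
        rw [div_le_iff₀ hp]; linarith [hsum2]
      rw [hsum]; linarith
  -- assemble
  have hlamnn : ∀ p, (0:ℝ) ≤ (lam p)^2 := fun p => sq_nonneg _
  calc ∑ p, ∑ q, σ p q * (lam p - lam q)^2
      ≤ ∑ p, ∑ q, ((σ p q + σ p q * (t q / t p)) * (lam p)^2
          + (σ p q + σ p q * (t p / t q)) * (lam q)^2) :=
        Finset.sum_le_sum fun p _ => Finset.sum_le_sum fun q _ => hedge p q
    _ = ∑ p, ((∑ q, (σ p q + σ p q * (t q / t p))) * (lam p)^2
          + ∑ q, (σ p q + σ p q * (t p / t q)) * (lam q)^2) := by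
        refine Finset.sum_congr rfl fun p _ => ?_
        rw [Finset.sum_add_distrib, ← Finset.sum_mul]
    _ = (∑ p, (∑ q, (σ p q + σ p q * (t q / t p))) * (lam p)^2)
          + ∑ p, ∑ q, (σ p q + σ p q * (t p / t q)) * (lam q)^2 :=
        Finset.sum_add_distrib
    _ = (∑ p, (∑ q, (σ p q + σ p q * (t q / t p))) * (lam p)^2)
          + ∑ q, (∑ p, (σ q p + σ q p * (t p / t q))) * (lam q)^2 := by
        congr 1
        rw [Finset.sum_comm]
        refine Finset.sum_congr rfl fun q _ => ?_
        rw [Finset.sum_mul]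
        refine Finset.sum_congr rfl fun p _ => ?_
        rw [hsym p q]
    _ ≤ (∑ p, K * (lam p)^2) + ∑ q, K * (lam q)^2 :=
        add_le_add
          (Finset.sum_le_sum fun p _ => mul_le_mul_of_nonneg_right (hrow p) (hlamnn p))
          (Finset.sum_le_sum fun q _ => mul_le_mul_of_nonneg_right (hrow q) (hlamnn q))
    _ = (Θ + 2*c) * ∑ p, (lam p)^2 := by
        rw [← Finset.mul_sum, hK]; ring


section conj

variable {n : ℕ} (U : Matrix (Fin n) (Fin n) ℝ)


variable (U : Matrix (Fin n) (Fin n) ℝ) (hU1 : U * Uᵀ = 1) (hU2 : Uᵀ * U = 1)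

lemma conj_entry (X : Matrix (Fin n) (Fin n) ℝ) (a b : Fin n) :
    (Uᵀ * X * U) a b = ∑ p, ∑ q, Uᵀ a p * Uᵀ b q * X p q := by
  have h1 : (Uᵀ * X * U) a b = ∑ q, (∑ p, Uᵀ a p * X p q) * U q b := by
    simp [Matrix.mul_apply]
  rw [h1, Finset.sum_comm]
  refine Finset.sum_congr rfl fun p _ => ?_
  rw [Finset.sum_mul]
  refine Finset.sum_congr rfl fun q _ => ?_
  simp [Matrix.transpose_apply]; ring


lemma ipm_conj (hU1 : U * Uᵀ = 1) (X X' : Matrix (Fin n) (Fin n) ℝ) :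
    ipm (Uᵀ * X * U) (Uᵀ * X' * U) = ipm X X' := by
  have hO : Uᵀᵀ * Uᵀ = 1 := by rwa [Matrix.transpose_transpose]
  unfold ipm
  calc ∑ a, ∑ b, (Uᵀ * X * U) a b * (Uᵀ * X' * U) a b
      = ∑ a, ∑ b, (∑ p, ∑ q, Uᵀ a p * Uᵀ b q * X p q) * (∑ p, ∑ q, Uᵀ a p * Uᵀ b q * X' p q) := by
        refine Finset.sum_congr rfl fun a _ => Finset.sum_congr rfl fun b _ => ?_
        rw [conj_entry U X a b, conj_entry U X' a b]
    _ = ∑ p, ∑ q, X p q * X' p q := orth_contract2 Uᵀ Uᵀ hO hO X X'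

lemma nsq_conj (hU1 : U * Uᵀ = 1) (X : Matrix (Fin n) (Fin n) ℝ) : nsq (Uᵀ * X * U) = nsq X := by
  rw [← ipm_self, ← ipm_self, ipm_conj U hU1]

end conj



lemma exists_orth_diag {N : ℕ} (A : Matrix (Fin N) (Fin N) ℝ) (hA : A.IsSymm) :
    ∃ (U : Matrix (Fin N) (Fin N) ℝ) (d : Fin N → ℝ),
      U * Uᵀ = 1 ∧ Uᵀ * U = 1 ∧ A = U * Matrix.diagonal d * Uᵀ := by
  have hherm : A.IsHermitian := by
    rwa [Matrix.IsHermitian, Matrix.conjTranspose_eq_transpose_of_trivial]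
  refine ⟨(Matrix.IsHermitian.eigenvectorUnitary hherm : Matrix (Fin N) (Fin N) ℝ),
    hherm.eigenvalues, ?_, ?_, ?_⟩
  · have := (Matrix.mem_unitaryGroup_iff).mp (Matrix.IsHermitian.eigenvectorUnitary hherm).2
    simpa [Matrix.star_eq_conjTranspose, Matrix.conjTranspose_eq_transpose_of_trivial] using this
  · have := (Matrix.mem_unitaryGroup_iff').mp (Matrix.IsHermitian.eigenvectorUnitary hherm).2
    simpa [Matrix.star_eq_conjTranspose, Matrix.conjTranspose_eq_transpose_of_trivial] using this
  · have h := Matrix.IsHermitian.spectral_theorem hherm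
    have : (RCLike.ofReal ∘ hherm.eigenvalues : Fin N → ℝ) = hherm.eigenvalues := by
      ext i; simp [RCLike.ofReal_real_eq_id]
    rw [this] at h
    simpa [Matrix.star_eq_conjTranspose, Matrix.conjTranspose_eq_transpose_of_trivial] using h


lemma flat_nsq {n : ℕ} (X : Matrix (Fin n) (Fin n) ℝ) :
    nsq X = ∑ z : Fin n × Fin n, (X z.1 z.2)^2 := by
  unfold nsq; exact (Fintype.sum_prod_type' _).symm

lemma flat_ipm {n : ℕ} (X Y : Matrix (Fin n) (Fin n) ℝ) :
    ipm X Y = ∑ z : Fin n × Fin n, X z.1 z.2 * Y z.1 z.2 := by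
  unfold ipm; exact (Fintype.sum_prod_type' _).symm

lemma nsq_sum_orth {n m : ℕ} (F : Finset (Fin m)) (Zf : Fin m → Matrix (Fin n) (Fin n) ℝ)
    (coef : Fin m → ℝ)
    (horth : ∀ s ∈ F, ∀ t ∈ F, s ≠ t → ipm (Zf s) (Zf t) = 0) :
    nsq (Matrix.of fun i j => ∑ s ∈ F, coef s * Zf s i j)
      = ∑ s ∈ F, (coef s)^2 * nsq (Zf s) := by
  rw [flat_nsq]
  calc ∑ z : Fin n × Fin n, ((Matrix.of fun i j => ∑ s ∈ F, coef s * Zf s i j) z.1 z.2)^2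
      = ∑ z : Fin n × Fin n, ∑ s ∈ F, ∑ t ∈ F,
          (coef s * coef t) * (Zf s z.1 z.2 * Zf t z.1 z.2) := by
        refine Finset.sum_congr rfl fun z _ => ?_
        show (∑ s ∈ F, coef s * Zf s z.1 z.2)^2 = _
        rw [sq, Finset.sum_mul_sum]
        exact Finset.sum_congr rfl fun s _ => Finset.sum_congr rfl fun t _ => by ring
    _ = ∑ s ∈ F, ∑ t ∈ F, ∑ z : Fin n × Fin n,
          (coef s * coef t) * (Zf s z.1 z.2 * Zf t z.1 z.2) := by
        rw [Finset.sum_comm]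
        exact Finset.sum_congr rfl fun s _ => Finset.sum_comm
    _ = ∑ s ∈ F, ∑ t ∈ F, (coef s * coef t) * ipm (Zf s) (Zf t) := by
        refine Finset.sum_congr rfl fun s _ => Finset.sum_congr rfl fun t _ => ?_
        rw [flat_ipm, Finset.mul_sum]
    _ = ∑ s ∈ F, (coef s)^2 * nsq (Zf s) := by
        refine Finset.sum_congr rfl fun s hs => ?_
        rw [Finset.sum_eq_single_of_mem s hs]
        · rw [ipm_self]; ring
        · intro t ht hts
          rw [horth s hs t ht (Ne.symm hts)]
          ring

/-- The star lemma: commutators with a fixed symmetric matrix, summed over a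
pairwise orthogonal family. -/
lemma star_lemma {n m : ℕ} (W : Matrix (Fin n) (Fin n) ℝ) (hW : W.IsSymm)
    (Y : Fin m → Matrix (Fin n) (Fin n) ℝ) (hY : ∀ s, (Y s).IsSymm)
    (F : Finset (Fin m))
    (horth : ∀ s ∈ F, ∀ t ∈ F, s ≠ t → ipm (Y s) (Y t) = 0)
    (M : ℝ) (hM0 : 0 ≤ M) (hM : ∀ s ∈ F, nsq (Y s) ≤ M) :
    ∑ s ∈ F, nsq (Y s * W - W * Y s) ≤ nsq W * ((∑ s ∈ F, nsq (Y s)) + M) := by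
  obtain ⟨U, lam, hU1, hU2, hWdec⟩ := exists_orth_diag W hW
  set D : Matrix (Fin n) (Fin n) ℝ := Matrix.diagonal lam with hD
  set Z : Fin m → Matrix (Fin n) (Fin n) ℝ := fun s => Uᵀ * Y s * U with hZ
  -- conjugation sends commutators with W to commutators with D
  have hcomm : ∀ s, Uᵀ * (Y s * W - W * Y s) * U = Z s * D - D * Z s := by
    intro s
    have h1 : Uᵀ * (Y s * W) * U = Z s * D := by
      calc Uᵀ * (Y s * W) * U = Uᵀ * Y s * U * D * (Uᵀ * U) := by
            rw [hWdec]; simp only [Matrix.mul_assoc]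
        _ = Z s * D := by rw [hU2, Matrix.mul_one, hZ]
    have h2 : Uᵀ * (W * Y s) * U = D * Z s := by
      calc Uᵀ * (W * Y s) * U = (Uᵀ * U) * D * (Uᵀ * Y s * U) := by
            rw [hWdec]; simp only [Matrix.mul_assoc]
        _ = D * Z s := by rw [hU2, Matrix.one_mul, hZ]
    calc Uᵀ * (Y s * W - W * Y s) * U
        = Uᵀ * (Y s * W) * U - Uᵀ * (W * Y s) * U := by
          rw [Matrix.mul_sub, Matrix.sub_mul]
      _ = Z s * D - D * Z s := by rw [h1, h2]
  have hZsym : ∀ s a b, Z s a b = Z s b a := by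
    intro s a b
    have h := congrArg (fun X => X b a) (congrArg Matrix.transpose (hZ ▸ rfl : Z s = Uᵀ * Y s * U))
    have : (Z s)ᵀ = Z s := by
      rw [hZ]
      calc (Uᵀ * Y s * U)ᵀ = Uᵀ * (Y s)ᵀ * Uᵀᵀ := by
            rw [Matrix.transpose_mul, Matrix.transpose_mul]
            rw [Matrix.mul_assoc]
        _ = Uᵀ * Y s * U := by rw [Matrix.transpose_transpose, (hY s)]
    exact (congrFun (congrFun this a) b).symm
  -- entries of the diagonal commutator
  have hentry : ∀ s, nsq (Z s * D - D * Z s) = ∑ a, ∑ b, (Z s a b)^2 * (lam a - lam b)^2 := by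
    intro s
    unfold nsq
    refine Finset.sum_congr rfl fun a _ => Finset.sum_congr rfl fun b _ => ?_
    rw [Matrix.sub_apply, hD, Matrix.mul_diagonal, Matrix.diagonal_mul]
    ring
  -- the weights
  set σ : Fin n → Fin n → ℝ := fun a b => if a = b then 0 else ∑ s ∈ F, (Z s a b)^2 with hσ
  have hσsym : ∀ a b, σ a b = σ b a := by
    intro a b
    rw [hσ]
    by_cases h : a = b
    · simp [h]
    · simp only [if_neg h, if_neg (Ne.symm h)]
      exact Finset.sum_congr rfl fun s _ => by rw [hZsym s a b]
  have hσnn : ∀ a b, 0 ≤ σ a b := by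
    intro a b
    rw [hσ]
    by_cases h : a = b
    · simp [h]
    · simp only [if_neg h]
      exact Finset.sum_nonneg fun s _ => sq_nonneg _
  have hσdiag : ∀ a, σ a a = 0 := fun a => by rw [hσ]; simp
  -- conjugated family inherits orthogonality and norms
  have hZipm : ∀ s t, ipm (Z s) (Z t) = ipm (Y s) (Y t) := by
    intro s t; rw [hZ]; exact ipm_conj U hU1 _ _
  have hZnsq : ∀ s, nsq (Z s) = nsq (Y s) := by
    intro s; rw [hZ]; exact nsq_conj U hU1 _
  -- Bessel bound
  have hBessel : ∀ a b, σ a b ≤ M / 2 := by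
    intro a b
    by_cases hab : a = b
    · rw [hσ]; simp [hab]; linarith
    · rw [hσ]; simp only [if_neg hab]
      set σ0 : ℝ := ∑ s ∈ F, (Z s a b)^2 with hσ0
      have hσ0nn : 0 ≤ σ0 := Finset.sum_nonneg fun s _ => sq_nonneg _
      set X : Matrix (Fin n) (Fin n) ℝ := fun i j => ∑ s ∈ F, Z s a b * Z s i j with hX
      have hXab : X a b = σ0 := by
        rw [hX, hσ0]; exact Finset.sum_congr rfl fun s _ => (pow_two (Z s a b)).symm
      have hXba : X b a = σ0 := by
        rw [hX, hσ0]
        exact Finset.sum_congr rfl fun s _ => by rw [hZsym s b a, ← pow_two]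
      have horthZ : ∀ s ∈ F, ∀ t ∈ F, s ≠ t → ipm (Z s) (Z t) = 0 := by
        intro s hs t ht hst
        rw [hZipm s t]
        exact horth s hs t ht hst
      have hexp : nsq X = ∑ s ∈ F, (Z s a b)^2 * nsq (Z s) := by
        have := nsq_sum_orth F Z (fun s => Z s a b) horthZ
        rw [hX]
        exact this
      have hnsqX : nsq X ≤ M * σ0 := by
        rw [hexp, hσ0]
        calc ∑ s ∈ F, (Z s a b)^2 * nsq (Z s)
            ≤ ∑ s ∈ F, (Z s a b)^2 * M := by
              refine Finset.sum_le_sum fun s hs => ?_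
              exact mul_le_mul_of_nonneg_left (by rw [hZnsq s]; exact hM s hs) (sq_nonneg _)
          _ = M * ∑ s ∈ F, (Z s a b)^2 := by rw [← Finset.sum_mul]; ring
      have htwo : 2 * σ0^2 ≤ nsq X := by
        have h1 : (X a b)^2 ≤ ∑ j, (X a j)^2 :=
          Finset.single_le_sum (f := fun j => (X a j)^2) (fun j _ => sq_nonneg _) (Finset.mem_univ b)
        have h2 : (X b a)^2 ≤ ∑ j, (X b j)^2 :=
          Finset.single_le_sum (f := fun j => (X b j)^2) (fun j _ => sq_nonneg _) (Finset.mem_univ a)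
        have h3 : (∑ j, (X a j)^2) + ∑ j, (X b j)^2 ≤ nsq X := by
          unfold nsq
          have := Finset.sum_le_sum_of_subset_of_nonneg
            (f := fun i => ∑ j, (X i j)^2)
            (Finset.subset_univ ({a, b} : Finset (Fin n)))
            (fun i _ _ => Finset.sum_nonneg fun j _ => sq_nonneg (X i j))
          rwa [Finset.sum_pair hab] at this
        rw [hXab] at h1; rw [hXba] at h2
        linarith
      nlinarith [hσ0nn, htwo, hnsqX]
  -- identify the LHS
  have hLHS : ∑ s ∈ F, nsq (Y s * W - W * Y s) = ∑ a, ∑ b, σ a b * (lam a - lam b)^2 := by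
    calc ∑ s ∈ F, nsq (Y s * W - W * Y s)
        = ∑ s ∈ F, nsq (Z s * D - D * Z s) := by
          refine Finset.sum_congr rfl fun s _ => ?_
          rw [← hcomm s, nsq_conj U hU1]
      _ = ∑ s ∈ F, ∑ a, ∑ b, (Z s a b)^2 * (lam a - lam b)^2 :=
          Finset.sum_congr rfl fun s _ => hentry s
      _ = ∑ a, ∑ b, (∑ s ∈ F, (Z s a b)^2) * (lam a - lam b)^2 := by
          rw [Finset.sum_comm]
          refine Finset.sum_congr rfl fun a _ => ?_
          rw [Finset.sum_comm]
          refine Finset.sum_congr rfl fun b _ => ?_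
          rw [Finset.sum_mul]
      _ = ∑ a, ∑ b, σ a b * (lam a - lam b)^2 := by
          refine Finset.sum_congr rfl fun a _ => Finset.sum_congr rfl fun b _ => ?_
          rw [hσ]
          by_cases h : a = b
          · simp [h]
          · simp [if_neg h]
  -- total weight bound
  have hΘ : (∑ a, ∑ b, σ a b) ≤ ∑ s ∈ F, nsq (Y s) := by
    calc ∑ a, ∑ b, σ a b ≤ ∑ a, ∑ b, ∑ s ∈ F, (Z s a b)^2 := by
          refine Finset.sum_le_sum fun a _ => Finset.sum_le_sum fun b _ => ?_
          rw [hσ]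
          by_cases h : a = b
          · simp [h]; exact Finset.sum_nonneg fun s _ => sq_nonneg _
          · simp [if_neg h]
      _ = ∑ s ∈ F, nsq (Z s) := by
          calc ∑ a, ∑ b, ∑ s ∈ F, (Z s a b)^2
              = ∑ a, ∑ s ∈ F, ∑ b, (Z s a b)^2 :=
                Finset.sum_congr rfl fun a _ => Finset.sum_comm
            _ = ∑ s ∈ F, ∑ a, ∑ b, (Z s a b)^2 := Finset.sum_comm
            _ = ∑ s ∈ F, nsq (Z s) := rfl
      _ = ∑ s ∈ F, nsq (Y s) := Finset.sum_congr rfl fun s _ => hZnsq s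
  -- nsq W = Σ lam²
  have hnsqW : nsq W = ∑ p, (lam p)^2 := by
    have hUWU : Uᵀ * W * U = D := by
      calc Uᵀ * W * U = (Uᵀ * U) * D * (Uᵀ * U) := by
            rw [hWdec]; simp only [Matrix.mul_assoc]
        _ = D := by rw [hU2, Matrix.one_mul, Matrix.mul_one]
    rw [← nsq_conj U hU1 W, hUWU, hD]
    unfold nsq
    refine Finset.sum_congr rfl fun p _ => ?_
    rw [Finset.sum_eq_single p]
    · simp [Matrix.diagonal_apply_eq]
    · intro q _ hq; simp [Matrix.diagonal_apply_ne' lam hq]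
    · intro h; exact absurd (Finset.mem_univ p) h
  -- apply the graph bound
  have hgraph := graph_bound σ hσsym hσnn hσdiag (M/2) (by linarith) hBessel lam
  rw [hLHS, hnsqW]
  have hfinal : (∑ a, ∑ b, σ a b) + 2*(M/2) ≤ (∑ s ∈ F, nsq (Y s)) + M := by linarith
  calc ∑ a, ∑ b, σ a b * (lam a - lam b)^2
      ≤ ((∑ a, ∑ b, σ a b) + 2*(M/2)) * ∑ p, (lam p)^2 := hgraph
    _ ≤ ((∑ s ∈ F, nsq (Y s)) + M) * ∑ p, (lam p)^2 := by
        apply mul_le_mul_of_nonneg_right hfinal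
        positivity
    _ = (∑ p, (lam p)^2) * ((∑ s ∈ F, nsq (Y s)) + M) := by ring

lemma ipm_comm {n : ℕ} (X Y : Matrix (Fin n) (Fin n) ℝ) : ipm X Y = ipm Y X := by
  unfold ipm
  exact Finset.sum_congr rfl fun i _ => Finset.sum_congr rfl fun j _ => mul_comm _ _

lemma nsq_swap_sub {n : ℕ} (X Y : Matrix (Fin n) (Fin n) ℝ) : nsq (X - Y) = nsq (Y - X) := by
  unfold nsq
  refine Finset.sum_congr rfl fun i _ => Finset.sum_congr rfl fun j _ => ?_
  rw [Matrix.sub_apply, Matrix.sub_apply]; ring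

set_option maxHeartbeats 2000000 in
/-- The Li–Li inequality. -/
theorem lili {n m : ℕ} (hm : 1 ≤ m) (A : Fin m → Matrix (Fin n) (Fin n) ℝ)
    (hA : ∀ α, (A α).IsSymm) :
    (∑ α, ∑ β, (ipm (A α) (A β))^2) + (∑ α, ∑ β, nsq (A α * A β - A β * A α))
      ≤ (3/2) * (∑ α, nsq (A α))^2 := by
  classical
  -- Gram matrix and its diagonalization
  set G : Matrix (Fin m) (Fin m) ℝ := Matrix.of fun α β => ipm (A α) (A β) with hGdef
  have hGsym : G.IsSymm := by
    unfold Matrix.IsSymm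
    ext α β
    simp only [Matrix.transpose_apply, hGdef, Matrix.of_apply]
    exact ipm_comm _ _
  obtain ⟨V, d, hV1, hV2, hGdec⟩ := exists_orth_diag G hGsym
  set O : Matrix (Fin m) (Fin m) ℝ := Vᵀ with hOdef
  have hO1 : Oᵀ * O = 1 := by rw [hOdef, Matrix.transpose_transpose]; exact hV1
  have hO2 : O * Oᵀ = 1 := by rw [hOdef, Matrix.transpose_transpose]; exact hV2
  set B : Fin m → Matrix (Fin n) (Fin n) ℝ :=
    fun r => Matrix.of fun i j => ∑ α, O r α * A α i j with hBdef
  have hBapp : ∀ r i j, B r i j = ∑ α, O r α * A α i j := fun r i j => rfl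
  have hBsym : ∀ r, (B r).IsSymm := by
    intro r
    unfold Matrix.IsSymm
    ext i j
    simp only [Matrix.transpose_apply, hBapp]
    refine Finset.sum_congr rfl fun α _ => ?_
    rw [show A α j i = A α i j from congrFun (congrFun (hA α) i) j]
  -- inner products of rotated family
  have hipmB : ∀ r s, ipm (B r) (B s) = ∑ α, ∑ β, O r α * O s β * G α β := by
    intro r s
    rw [flat_ipm]
    calc ∑ z : Fin n × Fin n, B r z.1 z.2 * B s z.1 z.2
        = ∑ z : Fin n × Fin n, ∑ α, ∑ β, (O r α * O s β) * (A α z.1 z.2 * A β z.1 z.2) := by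
          refine Finset.sum_congr rfl fun z _ => ?_
          rw [hBapp, hBapp, Finset.sum_mul_sum]
          exact Finset.sum_congr rfl fun α _ => Finset.sum_congr rfl fun β _ => by ring
      _ = ∑ α, ∑ β, ∑ z : Fin n × Fin n, (O r α * O s β) * (A α z.1 z.2 * A β z.1 z.2) := by
          rw [Finset.sum_comm]
          exact Finset.sum_congr rfl fun α _ => Finset.sum_comm
      _ = ∑ α, ∑ β, O r α * O s β * G α β := by
          refine Finset.sum_congr rfl fun α _ => Finset.sum_congr rfl fun β _ => ?_
          rw [hGdef]
          simp only [Matrix.of_apply]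
          rw [flat_ipm, Finset.mul_sum]
  have hBorth : ∀ r s, r ≠ s → ipm (B r) (B s) = 0 := by
    intro r s hrs
    rw [hipmB r s]
    have hVV : Vᵀ * V = 1 := hV2
    have hVGV : Vᵀ * G * V = Matrix.diagonal d := by
      calc Vᵀ * G * V = (Vᵀ * V) * Matrix.diagonal d * (Vᵀ * V) := by
            rw [hGdec]; simp only [Matrix.mul_assoc]; rfl
        _ = Matrix.diagonal d := by rw [hVV, Matrix.one_mul, Matrix.mul_one]
    have := conj_entry V G r s
    rw [hVGV] at this
    rw [hOdef, ← this, Matrix.diagonal_apply_ne d hrs]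
  -- S invariance
  have hS : ∑ r, nsq (B r) = ∑ α, nsq (A α) := by
    calc ∑ r, nsq (B r) = ∑ r, ∑ z : Fin n × Fin n, (B r z.1 z.2)^2 := by
          exact Finset.sum_congr rfl fun r _ => flat_nsq _
      _ = ∑ z : Fin n × Fin n, ∑ r, (∑ α, O r α * A α z.1 z.2) * (∑ β, O r β * A β z.1 z.2) := by
          rw [Finset.sum_comm]
          refine Finset.sum_congr rfl fun z _ => Finset.sum_congr rfl fun r _ => ?_
          rw [hBapp, sq]
      _ = ∑ z : Fin n × Fin n, ∑ α, A α z.1 z.2 * A α z.1 z.2 :=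
          Finset.sum_congr rfl fun z _ => orth_contract O hO1 _ _
      _ = ∑ α, nsq (A α) := by
          rw [Finset.sum_comm]
          refine Finset.sum_congr rfl fun α _ => ?_
          rw [flat_nsq]
          exact Finset.sum_congr rfl fun z _ => (pow_two _).symm
  -- T invariance
  have hT : ∑ α, ∑ β, (ipm (A α) (A β))^2 = ∑ r, (nsq (B r))^2 := by
    have h1 : ∑ r, ∑ s, (ipm (B r) (B s))^2 = ∑ α, ∑ β, (G α β)^2 := by
      calc ∑ r, ∑ s, (ipm (B r) (B s))^2
          = ∑ r, ∑ s, (∑ α, ∑ β, O r α * O s β * G α β) * (∑ α, ∑ β, O r α * O s β * G α β) := by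
            refine Finset.sum_congr rfl fun r _ => Finset.sum_congr rfl fun s _ => ?_
            rw [hipmB, sq]
        _ = ∑ α, ∑ β, G α β * G α β := orth_contract2 O O hO1 hO1 G G
        _ = ∑ α, ∑ β, (G α β)^2 := by
            exact Finset.sum_congr rfl fun α _ => Finset.sum_congr rfl fun β _ => (pow_two _).symm
    have h2 : ∑ r, ∑ s, (ipm (B r) (B s))^2 = ∑ r, (nsq (B r))^2 := by
      refine Finset.sum_congr rfl fun r _ => ?_
      rw [Finset.sum_eq_single r]
      · rw [ipm_self]
      · intro s _ hsr
        rw [hBorth r s (Ne.symm hsr)]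
        simp
      · intro h; exact absurd (Finset.mem_univ r) h
    rw [← h2, h1]
    refine Finset.sum_congr rfl fun α _ => Finset.sum_congr rfl fun β _ => ?_
    rw [hGdef]; rfl
  -- commutator entries transform equivariantly
  have hmul : ∀ r s (i j : Fin n), (B r * B s) i j = ∑ α, ∑ β, O r α * O s β * (A α * A β) i j := by
    intro r s i j
    calc (B r * B s) i j = ∑ k, (∑ α, O r α * A α i k) * (∑ β, O s β * A β k j) := by
          rw [Matrix.mul_apply]
          exact Finset.sum_congr rfl fun k _ => by rw [hBapp, hBapp]
      _ = ∑ k, ∑ α, ∑ β, (O r α * O s β) * (A α i k * A β k j) := by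
          refine Finset.sum_congr rfl fun k _ => ?_
          rw [Finset.sum_mul_sum]
          exact Finset.sum_congr rfl fun α _ => Finset.sum_congr rfl fun β _ => by ring
      _ = ∑ α, ∑ β, ∑ k, (O r α * O s β) * (A α i k * A β k j) := by
          rw [Finset.sum_comm]
          exact Finset.sum_congr rfl fun α _ => Finset.sum_comm
      _ = ∑ α, ∑ β, O r α * O s β * (A α * A β) i j := by
          refine Finset.sum_congr rfl fun α _ => Finset.sum_congr rfl fun β _ => ?_
          rw [Matrix.mul_apply, Finset.mul_sum]
  have hcommB : ∀ r s (i j : Fin n), (B r * B s - B s * B r) i j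
      = ∑ α, ∑ β, O r α * O s β * ((A α * A β - A β * A α) i j) := by
    intro r s i j
    rw [Matrix.sub_apply, hmul r s i j, hmul s r i j]
    have hswap : ∑ α, ∑ β, O s α * O r β * (A α * A β) i j
        = ∑ α, ∑ β, O r α * O s β * (A β * A α) i j := by
      rw [Finset.sum_comm]
      exact Finset.sum_congr rfl fun α _ => Finset.sum_congr rfl fun β _ => by ring
    rw [hswap, ← Finset.sum_sub_distrib]
    refine Finset.sum_congr rfl fun α _ => ?_
    rw [← Finset.sum_sub_distrib]
    refine Finset.sum_congr rfl fun β _ => ?_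
    rw [Matrix.sub_apply]; ring
  -- Q invariance
  have hQ : ∑ α, ∑ β, nsq (A α * A β - A β * A α) = ∑ r, ∑ s, nsq (B r * B s - B s * B r) := by
    symm
    calc ∑ r, ∑ s, nsq (B r * B s - B s * B r)
        = ∑ z : Fin n × Fin n, ∑ r, ∑ s,
            (∑ α, ∑ β, O r α * O s β * ((A α * A β - A β * A α) z.1 z.2))
            * (∑ α, ∑ β, O r α * O s β * ((A α * A β - A β * A α) z.1 z.2)) := by
          have : ∀ r, ∑ s, nsq (B r * B s - B s * B r)
              = ∑ s, ∑ z : Fin n × Fin n, ((B r * B s - B s * B r) z.1 z.2)^2 :=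
            fun r => Finset.sum_congr rfl fun s _ => flat_nsq _
          calc ∑ r, ∑ s, nsq (B r * B s - B s * B r)
              = ∑ r, ∑ z : Fin n × Fin n, ∑ s, ((B r * B s - B s * B r) z.1 z.2)^2 := by
                refine Finset.sum_congr rfl fun r _ => ?_
                rw [this r]; exact Finset.sum_comm
            _ = ∑ z : Fin n × Fin n, ∑ r, ∑ s, ((B r * B s - B s * B r) z.1 z.2)^2 :=
                Finset.sum_comm
            _ = _ := by
                refine Finset.sum_congr rfl fun z _ => Finset.sum_congr rfl fun r _ =>
                  Finset.sum_congr rfl fun s _ => ?_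
                rw [sq, hcommB r s z.1 z.2]
      _ = ∑ z : Fin n × Fin n, ∑ α, ∑ β, ((A α * A β - A β * A α) z.1 z.2)
            * ((A α * A β - A β * A α) z.1 z.2) := by
          refine Finset.sum_congr rfl fun z _ => ?_
          exact orth_contract2 O O hO1 hO1 _ _
      _ = ∑ α, ∑ β, nsq (A α * A β - A β * A α) := by
          calc ∑ z : Fin n × Fin n, ∑ α, ∑ β, ((A α * A β - A β * A α) z.1 z.2)
                * ((A α * A β - A β * A α) z.1 z.2)
              = ∑ α, ∑ z : Fin n × Fin n, ∑ β, ((A α * A β - A β * A α) z.1 z.2)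
                * ((A α * A β - A β * A α) z.1 z.2) := Finset.sum_comm
            _ = ∑ α, ∑ β, ∑ z : Fin n × Fin n, ((A α * A β - A β * A α) z.1 z.2)
                * ((A α * A β - A β * A α) z.1 z.2) :=
                Finset.sum_congr rfl fun α _ => Finset.sum_comm
            _ = ∑ α, ∑ β, nsq (A α * A β - A β * A α) := by
                refine Finset.sum_congr rfl fun α _ => Finset.sum_congr rfl fun β _ => ?_
                rw [flat_nsq]
                exact Finset.sum_congr rfl fun z _ => (pow_two _).symm
  -- bookkeeping with the star lemma
  have : Nonempty (Fin m) := ⟨⟨0, hm⟩⟩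
  obtain ⟨r₀, _, hmax⟩ := Finset.exists_max_image Finset.univ (fun r => nsq (B r))
    Finset.univ_nonempty
  set S : ℝ := ∑ r, nsq (B r) with hSdef
  set a : ℝ := nsq (B r₀) with hadef
  set Mr : Fin m → ℝ := fun r => if r = r₀ then S - a else a with hMrdef
  have hMr₀ : Mr r₀ = S - a := if_pos rfl
  have hMrne : ∀ r, r ≠ r₀ → Mr r = a := fun r hr => if_neg hr
  have hSr : ∀ r, ∑ s ∈ Finset.univ.erase r, nsq (B s) = S - nsq (B r) := by
    intro r
    have h := Finset.add_sum_erase Finset.univ (fun s => nsq (B s)) (Finset.mem_univ r)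
    have hS' : S = ∑ s, nsq (B s) := hSdef
    linarith [h, hS']
  have hstar : ∀ r, ∑ s ∈ Finset.univ.erase r, nsq (B s * B r - B r * B s)
      ≤ nsq (B r) * ((S - nsq (B r)) + Mr r) := by
    intro r
    have hMval : ∀ s ∈ Finset.univ.erase r, nsq (B s) ≤ Mr r := by
      intro s hs
      by_cases hr : r = r₀
      · rw [hr, hMr₀]
        have hsne : s ≠ r₀ := by rw [← hr]; exact (Finset.mem_erase.mp hs).1
        have h1 : nsq (B s) ≤ ∑ s' ∈ Finset.univ.erase r₀, nsq (B s') :=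
          Finset.single_le_sum (f := fun s' => nsq (B s'))
            (fun s' _ => nsq_nonneg _)
            (Finset.mem_erase.mpr ⟨hsne, Finset.mem_univ s⟩)
        rw [hSr r₀, ← hadef] at h1
        exact h1
      · rw [hMrne r hr]
        exact hmax s (Finset.mem_univ s)
    have hM0 : 0 ≤ Mr r := by
      by_cases hr : r = r₀
      · rw [hr, hMr₀, ← hSr r₀]
        exact Finset.sum_nonneg fun s _ => nsq_nonneg _
      · rw [hMrne r hr, hadef]
        exact nsq_nonneg _
    have h := star_lemma (B r) (hBsym r) B hBsym (Finset.univ.erase r)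
      (fun s hs t ht hst => hBorth s t hst) (Mr r) hM0 hMval
    rw [hSr r] at h
    exact h
  -- assemble Q bound
  have hQsplit : ∑ r, ∑ s, nsq (B r * B s - B s * B r)
      = ∑ r, ∑ s ∈ Finset.univ.erase r, nsq (B s * B r - B r * B s) := by
    refine Finset.sum_congr rfl fun r _ => ?_
    have h := Finset.add_sum_erase Finset.univ (fun s => nsq (B r * B s - B s * B r))
      (Finset.mem_univ r)
    have hdiag : nsq (B r * B r - B r * B r) = 0 := by
      unfold nsq; simp
    rw [← h, hdiag, zero_add]
    exact Finset.sum_congr rfl fun s _ => nsq_swap_sub _ _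
  have h1 : ∑ r, ∑ s ∈ Finset.univ.erase r, nsq (B s * B r - B r * B s)
      ≤ ∑ r, nsq (B r) * ((S - nsq (B r)) + Mr r) :=
    Finset.sum_le_sum fun r _ => hstar r
  have h2 : ∑ r, nsq (B r) * ((S - nsq (B r)) + Mr r)
      = (∑ r, (nsq (B r) * S - (nsq (B r))^2)) + ∑ r, nsq (B r) * Mr r := by
    rw [← Finset.sum_add_distrib]
    exact Finset.sum_congr rfl fun r _ => by ring
  have h3 : ∑ r, (nsq (B r) * S - (nsq (B r))^2) = S*S - ∑ r, (nsq (B r))^2 := by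
    rw [Finset.sum_sub_distrib, ← Finset.sum_mul, ← hSdef]
  have h4 : ∑ r, nsq (B r) * Mr r = 2*a*(S - a) := by
    have h := Finset.add_sum_erase Finset.univ (fun r => nsq (B r) * Mr r)
      (Finset.mem_univ r₀)
    have herase : ∑ r ∈ Finset.univ.erase r₀, nsq (B r) * Mr r
        = ∑ r ∈ Finset.univ.erase r₀, nsq (B r) * a := by
      refine Finset.sum_congr rfl fun r hr => ?_
      rw [hMrne r (Finset.mem_erase.mp hr).1]
    have herase2 : ∑ r ∈ Finset.univ.erase r₀, nsq (B r) * a = (S - a) * a := by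
      rw [← Finset.sum_mul, hSr r₀, ← hadef]
    have hfirst : nsq (B r₀) * Mr r₀ = a * (S - a) := by
      rw [hMr₀, ← hadef]
    rw [← h, hfirst, herase, herase2]
    ring
  -- final algebra
  rw [hT, hQ, ← hS]
  have ha_le : a ≤ S := by
    rw [hadef, hSdef]
    exact Finset.single_le_sum (f := fun r => nsq (B r)) (fun r _ => nsq_nonneg _)
      (Finset.mem_univ r₀)
  have ha0 : 0 ≤ a := by rw [hadef]; exact nsq_nonneg _
  have hTnn : 0 ≤ ∑ r, (nsq (B r))^2 := Finset.sum_nonneg fun r _ => sq_nonneg _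
  have hQb : ∑ r, ∑ s, nsq (B r * B s - B s * B r)
      ≤ (S*S - ∑ r, (nsq (B r))^2) + 2*a*(S - a) := by
    rw [hQsplit]
    calc ∑ r, ∑ s ∈ Finset.univ.erase r, nsq (B s * B r - B r * B s)
        ≤ ∑ r, nsq (B r) * ((S - nsq (B r)) + Mr r) := h1
      _ = (∑ r, (nsq (B r) * S - (nsq (B r))^2)) + ∑ r, nsq (B r) * Mr r := h2
      _ = (S*S - ∑ r, (nsq (B r))^2) + 2*a*(S - a) := by rw [h3, h4]
  nlinarith [hQb, sq_nonneg (S - 2*a)]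


lemma nsq_add {n : ℕ} (X Y : Matrix (Fin n) (Fin n) ℝ) :
    nsq (X + Y) = nsq X + 2 * ipm X Y + nsq Y := by
  rw [flat_nsq, flat_nsq, flat_nsq, flat_ipm, Finset.mul_sum,
    ← Finset.sum_add_distrib, ← Finset.sum_add_distrib]
  refine Finset.sum_congr rfl fun z _ => ?_
  rw [Matrix.add_apply]; ring

lemma trace_eq_ipm {n m : ℕ} (X Y : Matrix (Fin n) (Fin n) ℝ) (hY : Y.IsSymm) :
    Matrix.trace (X * Y) = ipm X Y := by
  unfold ipm
  rw [Matrix.trace]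
  unfold Matrix.diag
  calc ∑ i, (X * Y) i i = ∑ i, ∑ j, X i j * Y j i := by
        exact Finset.sum_congr rfl fun i _ => Matrix.mul_apply
    _ = ∑ i, ∑ j, X i j * Y i j := by
        refine Finset.sum_congr rfl fun i _ => Finset.sum_congr rfl fun j _ => ?_
        rw [show Y j i = Y i j from congrFun (congrFun hY i) j]

lemma flat4 {n m : ℕ} (F : Fin m → Fin m → Fin n → Fin n → ℝ) :
    (∑ α, ∑ β, ∑ i, ∑ j, F α β i j)
      = ∑ z : Fin m × Fin m × Fin n × Fin n, F z.1 z.2.1 z.2.2.1 z.2.2.2 := by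
  symm
  calc ∑ z : Fin m × Fin m × Fin n × Fin n, F z.1 z.2.1 z.2.2.1 z.2.2.2
      = ∑ α, ∑ w : Fin m × Fin n × Fin n, F α w.1 w.2.1 w.2.2 :=
        Fintype.sum_prod_type' (f := fun (α : Fin m) (w : Fin m × Fin n × Fin n) => F α w.1 w.2.1 w.2.2)
    _ = ∑ α, ∑ β, ∑ w : Fin n × Fin n, F α β w.1 w.2 :=
        Finset.sum_congr rfl fun α _ =>
          Fintype.sum_prod_type' (f := fun (β : Fin m) (w : Fin n × Fin n) => F α β w.1 w.2)
    _ = ∑ α, ∑ β, ∑ i, ∑ j, F α β i j :=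
        Finset.sum_congr rfl fun α _ => Finset.sum_congr rfl fun β _ =>
          Fintype.sum_prod_type' (f := fun (i : Fin n) (j : Fin n) => F α β i j)

end Stmt16

open Stmt16 in
/-- Pointwise algebraic content of inequality (4.6) of Lemma 4.1: for symmetric
matrices `A_α` and arbitrary matrices `B_{αβ}`,
`∑_{α,β} (tr(A_α A_β))² + ∑_{α,β} ‖B_{αβ} + [A_α, A_β]‖_F²
  ≤ (3/2)S² + ‖B‖² + 4‖B‖·S`,
where `S = ∑_α ‖A_α‖_F²` and `‖B‖² = ∑_{α,β} ‖B_{αβ}‖_F²`. -/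
theorem stmt_16 {n m : ℕ} (hn : 1 ≤ n) (hm : 1 ≤ m)
    (A : Fin m → Matrix (Fin n) (Fin n) ℝ) (hA : ∀ α, (A α).IsSymm)
    (B : Fin m → Fin m → Matrix (Fin n) (Fin n) ℝ) :
    (∑ α, ∑ β, (Matrix.trace (A α * A β)) ^ 2)
      + ∑ α, ∑ β, ∑ i, ∑ j, ((B α β + (A α * A β - A β * A α)) i j) ^ 2
      ≤ (3 / 2) * (∑ α, ∑ i, ∑ j, (A α i j) ^ 2) ^ 2
        + (∑ α, ∑ β, ∑ i, ∑ j, (B α β i j) ^ 2)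
        + 4 * Real.sqrt (∑ α, ∑ β, ∑ i, ∑ j, (B α β i j) ^ 2)
            * (∑ α, ∑ i, ∑ j, (A α i j) ^ 2) := by
  classical
  set S : ℝ := ∑ α, ∑ i, ∑ j, (A α i j) ^ 2 with hSdef
  set T : ℝ := ∑ α, ∑ β, (ipm (A α) (A β))^2 with hTdef
  set Q : ℝ := ∑ α, ∑ β, nsq (A α * A β - A β * A α) with hQdef
  set b2 : ℝ := ∑ α, ∑ β, ∑ i, ∑ j, (B α β i j) ^ 2 with hb2def
  set cross : ℝ := ∑ α, ∑ β, ipm (B α β) (A α * A β - A β * A α) with hcrossdef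
  -- identify S with Σ nsq
  have hSnsq : S = ∑ α, nsq (A α) := rfl
  have hS0 : 0 ≤ S := by
    rw [hSnsq]; exact Finset.sum_nonneg fun α _ => nsq_nonneg _
  have hT0 : 0 ≤ T := by
    rw [hTdef]
    exact Finset.sum_nonneg fun α _ => Finset.sum_nonneg fun β _ => sq_nonneg _
  have hQ0 : 0 ≤ Q := by
    rw [hQdef]
    exact Finset.sum_nonneg fun α _ => Finset.sum_nonneg fun β _ => nsq_nonneg _
  have hb20 : 0 ≤ b2 := by
    rw [hb2def]
    exact Finset.sum_nonneg fun α _ => Finset.sum_nonneg fun β _ =>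
      Finset.sum_nonneg fun i _ => Finset.sum_nonneg fun j _ => sq_nonneg _
  -- trace terms
  have htrace : (∑ α, ∑ β, (Matrix.trace (A α * A β)) ^ 2) = T := by
    rw [hTdef]
    refine Finset.sum_congr rfl fun α _ => Finset.sum_congr rfl fun β _ => ?_
    rw [trace_eq_ipm (m := m) _ _ (hA β)]
  -- Li–Li
  have hlili : T + Q ≤ (3/2) * S^2 := by
    rw [hTdef, hQdef, hSnsq]
    exact lili hm A hA
  -- expansion of the B part
  have hexpand : (∑ α, ∑ β, ∑ i, ∑ j, ((B α β + (A α * A β - A β * A α)) i j) ^ 2)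
      = b2 + 2*cross + Q := by
    have h1 : ∀ α β, (∑ i, ∑ j, ((B α β + (A α * A β - A β * A α)) i j) ^ 2)
        = nsq (B α β + (A α * A β - A β * A α)) := fun α β => rfl
    calc (∑ α, ∑ β, ∑ i, ∑ j, ((B α β + (A α * A β - A β * A α)) i j) ^ 2)
        = ∑ α, ∑ β, (nsq (B α β) + 2 * ipm (B α β) (A α * A β - A β * A α)
            + nsq (A α * A β - A β * A α)) := by
          refine Finset.sum_congr rfl fun α _ => Finset.sum_congr rfl fun β _ => ?_
          rw [h1 α β, nsq_add]
      _ = ∑ α, ((∑ β, nsq (B α β)) + (∑ β, 2 * ipm (B α β) (A α * A β - A β * A α))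
            + ∑ β, nsq (A α * A β - A β * A α)) := by
          refine Finset.sum_congr rfl fun α _ => ?_
          rw [Finset.sum_add_distrib, Finset.sum_add_distrib]
      _ = (∑ α, ∑ β, nsq (B α β)) + (∑ α, ∑ β, 2 * ipm (B α β) (A α * A β - A β * A α))
            + ∑ α, ∑ β, nsq (A α * A β - A β * A α) := by
          rw [Finset.sum_add_distrib, Finset.sum_add_distrib]
      _ = b2 + 2*cross + Q := by
          have e2 : ∑ α, ∑ β, (2:ℝ) * ipm (B α β) (A α * A β - A β * A α) = 2 * cross := by
            rw [hcrossdef, Finset.mul_sum]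
            exact Finset.sum_congr rfl fun α _ => (Finset.mul_sum _ _ _).symm
          rw [e2]
          rfl
  -- Cauchy–Schwarz for the cross term
  have hCS : cross^2 ≤ b2 * Q := by
    have hc : cross = ∑ z : Fin m × Fin m × Fin n × Fin n,
        (B z.1 z.2.1 z.2.2.1 z.2.2.2) * ((A z.1 * A z.2.1 - A z.2.1 * A z.1) z.2.2.1 z.2.2.2) := by
      rw [hcrossdef, ← flat4 (fun α β i j => B α β i j * ((A α * A β - A β * A α) i j))]
      rfl
    have hb : b2 = ∑ z : Fin m × Fin m × Fin n × Fin n,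
        (B z.1 z.2.1 z.2.2.1 z.2.2.2)^2 := by
      rw [hb2def, ← flat4 (fun α β i j => (B α β i j)^2)]
    have hq : Q = ∑ z : Fin m × Fin m × Fin n × Fin n,
        ((A z.1 * A z.2.1 - A z.2.1 * A z.1) z.2.2.1 z.2.2.2)^2 := by
      rw [hQdef, ← flat4 (fun α β i j => ((A α * A β - A β * A α) i j)^2)]
      rfl
    rw [hc, hb, hq]
    exact Finset.sum_mul_sq_le_sq_mul_sq Finset.univ _ _
  -- bound the cross term
  have hQ4 : Q ≤ (2*S)^2 := by nlinarith [hlili, hT0, hS0]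
  have hcross_le : cross ≤ Real.sqrt b2 * (2*S) := by
    have h1 : cross ≤ |cross| := le_abs_self _
    have h2 : |cross| = Real.sqrt (cross^2) := (Real.sqrt_sq_eq_abs _).symm
    have h3 : Real.sqrt (cross^2) ≤ Real.sqrt (b2 * Q) := Real.sqrt_le_sqrt hCS
    have h4 : Real.sqrt (b2 * Q) = Real.sqrt b2 * Real.sqrt Q := Real.sqrt_mul hb20 _
    have h5 : Real.sqrt Q ≤ 2*S := by
      calc Real.sqrt Q ≤ Real.sqrt ((2*S)^2) := Real.sqrt_le_sqrt hQ4
        _ = 2*S := Real.sqrt_sq (by linarith)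
    have h6 : Real.sqrt b2 * Real.sqrt Q ≤ Real.sqrt b2 * (2*S) :=
      mul_le_mul_of_nonneg_left h5 (Real.sqrt_nonneg _)
    linarith
  rw [htrace, hexpand]
  have hfinal : 2*cross ≤ 4 * Real.sqrt b2 * S := by linarith [hcross_le]
  linarith [hlili, hfinal]
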